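/- Let q ≥ 1 be an integer, φ : ℝ → (0,∞) a C¹ weight with |φ'(X)/φ(X)| ≤ C₀/|X| for X ≠ 0, and let u, ε be C¹ functions with compact support in [1, ∞), with |ε(X)| ≤ η|X| and |ε'(X)| ≤ η on the support of u. Then |∫ u^{2q-1}(X) u'(X) ε(X) / (φ(X)^{2q} |X|) dX| ≤ C(C₀)·η·∫ u(X)^{2q}/(φ(X)^{2q}|X|) dX. -/

import Mathlib

open Real MeasureTheory

/-- Integration-by-parts estimate for the transport nonlinearity (term `I₂`). -/
theorem transport_nonlinearity_estimate
    (C₀ : ℝ) (hC₀ : 0 < C₀) :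
    ∃ C > 0, ∀ (q : ℕ), 1 ≤ q → ∀ (φ u ε : ℝ → ℝ) (η : ℝ), 0 ≤ η →
      (∀ X, 0 < φ X) → ContDiff ℝ 1 φ →
      (∀ X : ℝ, X ≠ 0 → |deriv φ X / φ X| ≤ C₀ / |X|) →
      ContDiff ℝ 1 u → HasCompactSupport u → tsupport u ⊆ Set.Ici 1 →
      ContDiff ℝ 1 ε → HasCompactSupport ε → tsupport ε ⊆ Set.Ici 1 →
      (∀ X ∈ tsupport u, |ε X| ≤ η * |X| ∧ |deriv ε X| ≤ η) →
      |∫ X : ℝ, u X ^ (2 * q - 1) * deriv u X * ε X / (φ X ^ (2 * q) * |X|)|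
        ≤ C * η * ∫ X : ℝ, u X ^ (2 * q) / (φ X ^ (2 * q) * |X|) := by
  refine ⟨C₀ + 1, by linarith, ?_⟩
  intro q hq φ u ε η hη hφpos hφC1 hφ' huC1 hucs husupp hεC1 hεcs hεsupp hbd
  set n := 2 * q with hn
  have hn1 : 1 ≤ n := by omega
  have hnR : (2 : ℝ) ≤ (n : ℝ) := by exact_mod_cast (by omega : 2 ≤ n)
  have hnne : (n : ℝ) ≠ 0 := by positivity
  -- choose R
  obtain ⟨r, hr⟩ := hucs.isBounded.subset_closedBall 0
  set R : ℝ := max r 1 + 1 with hR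
  have hhR : (1:ℝ)/2 ≤ R := by
    have := le_max_right r 1; linarith
  have husub : tsupport u ⊆ Set.Ioc (1/2 : ℝ) R := by
    intro x hx
    have h1 : (1:ℝ) ≤ x := husupp hx
    have h2 := hr hx
    rw [Metric.mem_closedBall, Real.dist_eq, sub_zero] at h2
    have := le_abs_self x
    have := le_max_left r 1
    constructor <;> [linarith; linarith]
  have huzero : ∀ x, x ∉ tsupport u → u x = 0 :=
    fun x hx => image_eq_zero_of_notMem_tsupport hx
  have huR : u R = 0 := by
    apply huzero
    intro hmem
    have h2 := hr hmem
    rw [Metric.mem_closedBall, Real.dist_eq, sub_zero] at h2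
    have := le_abs_self R
    have := le_max_left r 1
    have : r ≤ max r 1 := le_max_left r 1
    simp only [hR] at h2 ⊢
    have habs : |max r 1 + 1| = max r 1 + 1 := abs_of_pos (by have := le_max_right r 1; linarith)
    rw [habs] at h2
    linarith
  have huhalf : u (1/2 : ℝ) = 0 := by
    apply huzero
    intro hmem
    have := husupp hmem
    simp at this; linarith
  -- functions
  set w : ℝ → ℝ := fun X => ε X / (φ X ^ n * X) with hw
  set D : ℝ → ℝ := fun X =>
    (deriv ε X * (φ X ^ n * X) -
      ε X * ((↑n * φ X ^ (n - 1) * deriv φ X) * X + φ X ^ n * 1)) / (φ X ^ n * X) ^ 2 with hD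
  set v : ℝ → ℝ := fun X => u X ^ n / n with hv
  set v' : ℝ → ℝ := fun X => u X ^ (n - 1) * deriv u X with hv'
  have huIcc : Set.uIcc (1/2 : ℝ) R = Set.Icc (1/2 : ℝ) R := Set.uIcc_of_le hhR
  have hxpos : ∀ x ∈ Set.Icc (1/2 : ℝ) R, 0 < x := fun x hx => lt_of_lt_of_le (by norm_num) hx.1
  have hdenne : ∀ x ∈ Set.Icc (1/2 : ℝ) R, φ x ^ n * x ≠ 0 := by
    intro x hx
    exact ne_of_gt (mul_pos (pow_pos (hφpos x) n) (hxpos x hx))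
  -- HasDerivAt facts
  have hvderiv : ∀ x ∈ Set.uIcc (1/2 : ℝ) R, HasDerivAt v (v' x) x := by
    intro x hx
    have hud := (huC1.differentiable one_ne_zero x).hasDerivAt
    have h1 : HasDerivAt (fun y => u y ^ n / (n : ℝ))
        (((n : ℝ) * u x ^ (n - 1) * deriv u x) / n) x := (hud.pow n).div_const _
    have : ((n : ℝ) * u x ^ (n - 1) * deriv u x) / n = v' x := by
      field_simp; ring
    rwa [this] at h1
  have hwderiv : ∀ x ∈ Set.uIcc (1/2 : ℝ) R, HasDerivAt w (D x) x := by
    intro x hx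
    rw [huIcc] at hx
    have hεd := (hεC1.differentiable one_ne_zero x).hasDerivAt
    have hφd := (hφC1.differentiable one_ne_zero x).hasDerivAt
    exact hεd.div ((hφd.pow n).mul (hasDerivAt_id x)) (hdenne x hx)
  -- continuity / integrability
  have hcontu' : Continuous (deriv u) := huC1.continuous_deriv le_rfl
  have hcontε' : Continuous (deriv ε) := hεC1.continuous_deriv le_rfl
  have hcontφ' : Continuous (deriv φ) := hφC1.continuous_deriv le_rfl
  have hcontden : ContinuousOn (fun x : ℝ => φ x ^ n * x) (Set.uIcc (1/2 : ℝ) R) :=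
    ((hφC1.continuous.pow n).mul continuous_id).continuousOn
  have hcontw : ContinuousOn w (Set.uIcc (1/2 : ℝ) R) := by
    apply ContinuousOn.div hεC1.continuous.continuousOn hcontden
    intro x hx; rw [huIcc] at hx; exact hdenne x hx
  have hcontD : ContinuousOn D (Set.uIcc (1/2 : ℝ) R) := by
    apply ContinuousOn.div
    · apply Continuous.continuousOn
      exact (hcontε'.mul ((hφC1.continuous.pow n).mul continuous_id)).sub
        (hεC1.continuous.mul
          ((((continuous_const.mul (hφC1.continuous.pow (n - 1))).mul hcontφ').mul
            continuous_id).add ((hφC1.continuous.pow n).mul continuous_const)))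
    · exact hcontden.pow 2
    · intro x hx; rw [huIcc] at hx; exact pow_ne_zero 2 (hdenne x hx)
  have hcontv : ContinuousOn v (Set.uIcc (1/2 : ℝ) R) :=
    ((huC1.continuous.pow n).div_const _).continuousOn
  have hcontv' : ContinuousOn v' (Set.uIcc (1/2 : ℝ) R) :=
    ((huC1.continuous.pow _).mul hcontu').continuousOn
  have hintv' : IntervalIntegrable v' volume (1/2 : ℝ) R := hcontv'.intervalIntegrable
  have hintD : IntervalIntegrable D volume (1/2 : ℝ) R := hcontD.intervalIntegrable
  have hintv'w : IntervalIntegrable (fun x => v' x * w x) volume (1/2 : ℝ) R :=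
    (hcontv'.mul hcontw).intervalIntegrable
  have hintvD : IntervalIntegrable (fun x => v x * D x) volume (1/2 : ℝ) R :=
    (hcontv.mul hcontD).intervalIntegrable
  -- integration by parts
  have hibp := intervalIntegral.integral_deriv_mul_eq_sub hvderiv hwderiv hintv' hintD
  have hvR : v R = 0 := by simp only [hv, huR]; rw [zero_pow (by omega : n ≠ 0)]; simp
  have hvhalf : v (1/2 : ℝ) = 0 := by
    simp only [hv, huhalf]; rw [zero_pow (by omega : n ≠ 0)]; simp
  rw [hvR, hvhalf, zero_mul, zero_mul, sub_zero] at hibp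
  have hsplit := intervalIntegral.integral_add hintv'w hintvD
  have hkey : ∫ x in (1/2 : ℝ)..R, v' x * w x = - ∫ x in (1/2 : ℝ)..R, v x * D x := by
    rw [hsplit] at hibp; linarith
  -- LHS over ℝ equals interval integral
  have hsuppf : Function.support
      (fun X => u X ^ (2 * q - 1) * deriv u X * ε X / (φ X ^ (2 * q) * |X|))
      ⊆ Set.Ioc (1/2 : ℝ) R := by
    intro x hx
    apply husub
    apply subset_tsupport
    simp only [Function.mem_support] at hx ⊢
    intro h0
    apply hx
    rw [h0, zero_pow (by omega : 2 * q - 1 ≠ 0)]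
    ring
  have hLHS1 : ∫ X : ℝ, u X ^ (2 * q - 1) * deriv u X * ε X / (φ X ^ (2 * q) * |X|)
      = ∫ X in (1/2 : ℝ)..R, u X ^ (2 * q - 1) * deriv u X * ε X / (φ X ^ (2 * q) * |X|) :=
    (intervalIntegral.integral_eq_integral_of_support_subset hsuppf).symm
  have hLHS2 : ∫ X in (1/2 : ℝ)..R, u X ^ (2 * q - 1) * deriv u X * ε X / (φ X ^ (2 * q) * |X|)
      = ∫ x in (1/2 : ℝ)..R, v' x * w x := by
    apply intervalIntegral.integral_congr
    intro x hx
    rw [huIcc] at hx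
    have : |x| = x := abs_of_pos (hxpos x hx)
    simp only [hv', hw, this, hn]
    ring
  -- pointwise bound on the interval
  set B : ℝ → ℝ := fun x => (C₀ + 1) * η * (u x ^ n / (φ x ^ n * x)) with hB
  have hptwise : ∀ x ∈ Set.Icc (1/2 : ℝ) R, |v x * D x| ≤ B x := by
    intro x hx
    by_cases hxu : x ∈ tsupport u
    · have hx1 : (1:ℝ) ≤ x := husupp hxu
      have hx0 : (0:ℝ) < x := by linarith
      have hφx := hφpos x
      have hP : (0:ℝ) < φ x ^ n := pow_pos hφx n
      have hden : (0:ℝ) < φ x ^ n * x := mul_pos hP hx0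
      obtain ⟨hε1, hε2⟩ := hbd x hxu
      rw [abs_of_pos hx0] at hε1
      have hφ'b : |deriv φ x| ≤ C₀ * φ x / x := by
        have h := hφ' x (ne_of_gt hx0)
        rw [abs_div, abs_of_pos hφx, abs_of_pos hx0, div_le_div_iff₀ hφx hx0] at h
        rw [le_div_iff₀ hx0]; linarith
      have hφn1 : φ x ^ (n - 1) * φ x = φ x ^ n := by
        rw [← pow_succ]; congr 1; omega
      have hA : |deriv ε x * (φ x ^ n * x)| ≤ η * (φ x ^ n * x) := by
        rw [abs_mul, abs_of_pos hden]
        exact mul_le_mul_of_nonneg_right hε2 hden.le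
      have hinner : |(↑n * φ x ^ (n - 1) * deriv φ x) * x + φ x ^ n * 1|
          ≤ (n : ℝ) * C₀ * φ x ^ n + φ x ^ n := by
        have h2 : |(↑n * φ x ^ (n - 1) * deriv φ x) * x| ≤ (n : ℝ) * C₀ * φ x ^ n := by
          rw [abs_mul, abs_mul, abs_mul, Nat.abs_cast,
            abs_of_pos (pow_pos hφx (n - 1)), abs_of_pos hx0]
          calc (n : ℝ) * φ x ^ (n - 1) * |deriv φ x| * x
              ≤ (n : ℝ) * φ x ^ (n - 1) * (C₀ * φ x / x) * x := by
                gcongr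
            _ = (n : ℝ) * C₀ * (φ x ^ (n - 1) * φ x) := by
                field_simp
            _ = (n : ℝ) * C₀ * φ x ^ n := by rw [hφn1]
        calc |(↑n * φ x ^ (n - 1) * deriv φ x) * x + φ x ^ n * 1|
            ≤ |(↑n * φ x ^ (n - 1) * deriv φ x) * x| + |φ x ^ n * 1| := abs_add_le _ _
          _ ≤ (n : ℝ) * C₀ * φ x ^ n + φ x ^ n := by
              rw [mul_one, abs_of_pos hP]; linarith
      have hBnum : |ε x * ((↑n * φ x ^ (n - 1) * deriv φ x) * x + φ x ^ n * 1)|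
          ≤ η * x * ((n : ℝ) * C₀ * φ x ^ n + φ x ^ n) := by
        rw [abs_mul]
        apply mul_le_mul hε1 hinner (abs_nonneg _)
        positivity
      have hnum : |deriv ε x * (φ x ^ n * x) -
          ε x * ((↑n * φ x ^ (n - 1) * deriv φ x) * x + φ x ^ n * 1)|
          ≤ ((n : ℝ) * C₀ + 2) * (η * (φ x ^ n * x)) := by
        calc |deriv ε x * (φ x ^ n * x) -
            ε x * ((↑n * φ x ^ (n - 1) * deriv φ x) * x + φ x ^ n * 1)|
            ≤ |deriv ε x * (φ x ^ n * x)| +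
              |ε x * ((↑n * φ x ^ (n - 1) * deriv φ x) * x + φ x ^ n * 1)| := abs_sub _ _
          _ ≤ η * (φ x ^ n * x) + η * x * ((n : ℝ) * C₀ * φ x ^ n + φ x ^ n) :=
              add_le_add hA hBnum
          _ = ((n : ℝ) * C₀ + 2) * (η * (φ x ^ n * x)) := by ring
      have hDb : |D x| ≤ ((n : ℝ) * C₀ + 2) * η / (φ x ^ n * x) := by
        simp only [hD]
        rw [abs_div, abs_pow, abs_of_pos hden]
        rw [div_le_div_iff₀ (pow_pos hden 2) hden]
        calc |deriv ε x * (φ x ^ n * x) -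
            ε x * ((↑n * φ x ^ (n - 1) * deriv φ x) * x + φ x ^ n * 1)| * (φ x ^ n * x)
            ≤ (((n : ℝ) * C₀ + 2) * (η * (φ x ^ n * x))) * (φ x ^ n * x) := by
              exact mul_le_mul_of_nonneg_right hnum hden.le
          _ = ((n : ℝ) * C₀ + 2) * η * (φ x ^ n * x) ^ 2 := by ring
      have hun : (0:ℝ) ≤ u x ^ n := by
        rw [hn]; exact (even_two_mul q).pow_nonneg _
      have hvnn : (0:ℝ) ≤ v x := by
        simp only [hv]; positivity
      have h1 : |v x * D x| ≤ (u x ^ n / n) * (((n : ℝ) * C₀ + 2) * η / (φ x ^ n * x)) := by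
        rw [abs_mul, abs_of_nonneg hvnn]
        exact mul_le_mul_of_nonneg_left hDb hvnn
      refine h1.trans ?_
      simp only [hB]
      rw [show (u x ^ n / n) * (((n : ℝ) * C₀ + 2) * η / (φ x ^ n * x))
          = (u x ^ n * (((n : ℝ) * C₀ + 2) * η)) / ((n : ℝ) * (φ x ^ n * x)) by ring,
        show (C₀ + 1) * η * (u x ^ n / (φ x ^ n * x))
          = ((C₀ + 1) * η * u x ^ n) / (φ x ^ n * x) by ring,
        div_le_div_iff₀ (by positivity) hden]
      nlinarith [mul_nonneg (mul_nonneg hun hη) hden.le]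
    · have hux : u x = 0 := huzero x hxu
      have : v x = 0 := by
        simp only [hv, hux]; rw [zero_pow (by omega : n ≠ 0)]; simp
      rw [this, zero_mul, abs_zero]
      simp only [hB, hux]
      rw [zero_pow (by omega : n ≠ 0)]
      simp
  -- bound the interval integral
  have hintB : IntervalIntegrable B volume (1/2 : ℝ) R := by
    apply ContinuousOn.intervalIntegrable
    apply ContinuousOn.mul continuousOn_const
    apply ContinuousOn.div (huC1.continuous.pow n).continuousOn hcontden
    intro x hx; rw [huIcc] at hx; exact hdenne x hx
  have hintabs : IntervalIntegrable (fun x => |v x * D x|) volume (1/2 : ℝ) R :=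
    ((hcontv.mul hcontD).abs).intervalIntegrable
  have hbound2 : |∫ x in (1/2 : ℝ)..R, v x * D x| ≤ ∫ x in (1/2 : ℝ)..R, B x := by
    calc |∫ x in (1/2 : ℝ)..R, v x * D x| ≤ ∫ x in (1/2 : ℝ)..R, |v x * D x| :=
        intervalIntegral.abs_integral_le_integral_abs hhR
      _ ≤ ∫ x in (1/2 : ℝ)..R, B x :=
        intervalIntegral.integral_mono_on hhR hintabs hintB hptwise
  -- RHS identification
  have hsupph : Function.support (fun X : ℝ => u X ^ (2 * q) / (φ X ^ (2 * q) * |X|))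
      ⊆ Set.Ioc (1/2 : ℝ) R := by
    intro x hx
    apply husub
    apply subset_tsupport
    simp only [Function.mem_support] at hx ⊢
    intro h0
    apply hx
    rw [h0, zero_pow (by omega : 2 * q ≠ 0)]
    ring
  have hRHS1 : ∫ X in (1/2 : ℝ)..R, u X ^ (2 * q) / (φ X ^ (2 * q) * |X|)
      = ∫ X : ℝ, u X ^ (2 * q) / (φ X ^ (2 * q) * |X|) :=
    intervalIntegral.integral_eq_integral_of_support_subset hsupph
  have hRHS2 : ∫ x in (1/2 : ℝ)..R, B x
      = (C₀ + 1) * η * ∫ X in (1/2 : ℝ)..R, u X ^ (2 * q) / (φ X ^ (2 * q) * |X|) := by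
    rw [← intervalIntegral.integral_const_mul]
    apply intervalIntegral.integral_congr
    intro x hx
    rw [huIcc] at hx
    have : |x| = x := abs_of_pos (hxpos x hx)
    simp only [hB, this, hn]
  -- conclude
  rw [hLHS1, hLHS2, hkey, abs_neg]
  calc |∫ x in (1/2 : ℝ)..R, v x * D x| ≤ ∫ x in (1/2 : ℝ)..R, B x := hbound2
    _ = (C₀ + 1) * η * ∫ X : ℝ, u X ^ (2 * q) / (φ X ^ (2 * q) * |X|) := by
        rw [hRHS2, hRHS1]
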